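/- Let 𝔤 = 𝔤⁰_{3.5} ⊕ 𝔤₁ be the 4-dimensional real Lie algebra with basis e₁,...,e₄ and nonzero brackets [e₂,e₃] = e₁ and [e₃,e₁] = e₂. A 4×4 real matrix R equals η·Id + D for some η ∈ ℝ and some derivation D of 𝔤 if and only if R₃₁ = R₄₁ = R₃₂ = R₄₂ = 0, R₁₄ = R₂₄ = R₃₄ = 0, R₂₁ = −R₁₂, and R₂₂ = R₁₁. In this case η = R₃₃. -/

import Mathlib

open Matrix

/-- The Lie bracket of the Lie algebra, in coordinates. -/
def br (x y : Fin 4 → ℝ) : Fin 4 → ℝ :=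
  ![(x 1 * y 2 - x 2 * y 1), (x 2 * y 0 - x 0 * y 2), (0:ℝ), (0:ℝ)]

/-- `D` (acting via `mulVec`) is a derivation of the bracket. -/
def IsDer (D : Matrix (Fin 4) (Fin 4) ℝ) : Prop :=
  ∀ x y : Fin 4 → ℝ, D.mulVec (br x y) = br (D.mulVec x) y + br x (D.mulVec y)

lemma isDer_of (D : Matrix (Fin 4) (Fin 4) ℝ)
    (h20 : D 2 0 = 0) (h30 : D 3 0 = 0) (h21 : D 2 1 = 0) (h31 : D 3 1 = 0)
    (h03 : D 0 3 = 0) (h13 : D 1 3 = 0) (h23 : D 2 3 = 0)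
    (h10 : D 1 0 = - D 0 1) (h11 : D 1 1 = D 0 0) (h22 : D 2 2 = 0) : IsDer D := by
  intro x y
  funext i
  fin_cases i <;>
    simp [br, Matrix.mulVec, dotProduct, Fin.sum_univ_four, h20, h30, h21, h31, h03, h13,
      h23, h10, h11, h22] <;> ring

lemma isDer_cond (D : Matrix (Fin 4) (Fin 4) ℝ) (hD : IsDer D) :
    D 2 0 = 0 ∧ D 3 0 = 0 ∧ D 2 1 = 0 ∧ D 3 1 = 0 ∧ D 0 3 = 0 ∧ D 1 3 = 0 ∧ D 2 3 = 0 ∧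
      D 1 0 = - D 0 1 ∧ D 1 1 = D 0 0 ∧ D 2 2 = 0 := by
  have h12 := hD ![0,1,0,0] ![0,0,1,0]
  have h20 := hD ![0,0,1,0] ![1,0,0,0]
  have h23 := hD ![0,0,1,0] ![0,0,0,1]
  have h03 := hD ![1,0,0,0] ![0,0,0,1]
  simp [br, Matrix.mulVec, dotProduct, Fin.sum_univ_four, funext_iff,
    Fin.forall_fin_succ] at h12 h20 h23 h03
  obtain ⟨a1, a2, a3, a4⟩ := h12
  obtain ⟨b1, b2, b3, b4⟩ := h20
  obtain ⟨c1, c2⟩ := h23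
  refine ⟨a3, a4, b3, b4, c2.symm, c1, ?_, a2, by linarith, by linarith⟩
  · linarith [h03]

theorem stmt_7 (R : Matrix (Fin 4) (Fin 4) ℝ) :
    ((∃ (η : ℝ) (D : Matrix (Fin 4) (Fin 4) ℝ), IsDer D ∧
        R = η • (1 : Matrix (Fin 4) (Fin 4) ℝ) + D) ↔
      (R 2 0 = 0 ∧ R 3 0 = 0 ∧ R 2 1 = 0 ∧ R 3 1 = 0 ∧ R 0 3 = 0 ∧ R 1 3 = 0 ∧ R 2 3 = 0 ∧ R 1 0 = -R 0 1 ∧ R 1 1 = R 0 0)) ∧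
    (∀ (η : ℝ) (D : Matrix (Fin 4) (Fin 4) ℝ), IsDer D →
      R = η • (1 : Matrix (Fin 4) (Fin 4) ℝ) + D → η = R 2 2) := by
  constructor
  · constructor
    · rintro ⟨η, D, hD, rfl⟩
      obtain ⟨d1, d2, d3, d4, d5, d6, d7, d8, d9, d10⟩ := isDer_cond D hD
      simp [Matrix.add_apply, Matrix.smul_apply, Matrix.one_apply]
      refine ⟨d1, d2, d3, d4, d5, d6, d7, by linarith, by linarith⟩
    · rintro ⟨h1, h2, h3, h4, h5, h6, h7, h8, h9⟩
      refine ⟨R 2 2, R - R 2 2 • (1 : Matrix (Fin 4) (Fin 4) ℝ), ?_, by abel⟩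
      apply isDer_of <;>
        simp [Matrix.sub_apply, Matrix.smul_apply, Matrix.one_apply, h1, h2, h3, h4, h5, h6,
          h7, h8, h9]
  · rintro η D hD rfl
    obtain ⟨-, -, -, -, -, -, -, -, -, d10⟩ := isDer_cond D hD
    simp [Matrix.add_apply, Matrix.smul_apply, Matrix.one_apply, d10]
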